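/- Population-level consistency of the calibration-weighted estimator under a linear conditional average treatment effect (Theorem 1, case (ii)): if τ(X) = γᵀ g(X) almost surely for some γ ∈ ℝ^K, and w : ℝ^p → [0,∞) is a measurable weight function whose δ-weighted g-moments are calibrated to the population, E[δ·w(X)·g(X)] = E[g(X)] (componentwise), then E[δ·w(X)·(A·Y/π_A − (1−A)·Y/(1−π_A))] = τ0. -/

import Mathlib

open MeasureTheory Filter Topology

/-- Auxiliary limit lemma: passing the outcome-model identity from bounded test functions
to the (possibly unbounded) nonnegative weight `w`, via truncation. -/
lemma aux_calib {Ω : Type*} [MeasurableSpace Ω] (P : Measure Ω) [IsProbabilityMeasure P]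
    {p : ℕ} (X : Ω → (Fin p → ℝ)) (hX : Measurable X)
    (b d Y : Ω → ℝ) (hb : Measurable b) (hd : Measurable d) (hY : Measurable Y)
    (hb01 : ∀ ω, b ω = 0 ∨ b ω = 1) (hd01 : ∀ ω, d ω = 0 ∨ d ω = 1)
    (c : ℝ) (hc : 0 < c)
    (μf : (Fin p → ℝ) → ℝ) (hμ : Measurable μf)
    (hμint : Integrable (fun ω => μf (X ω)) P)
    (w : (Fin p → ℝ) → ℝ) (hwm : Measurable w) (hw0 : ∀ x, 0 ≤ w x)
    (hint : Integrable (fun ω => b ω * Y ω * w (X ω)) P)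
    (hout : ∀ h : (Fin p → ℝ) → ℝ, Measurable h → (∃ C, ∀ x, |h x| ≤ C) →
      ∫ ω, b ω * Y ω * h (X ω) ∂P = c * ∫ ω, d ω * μf (X ω) * h (X ω) ∂P) :
    Integrable (fun ω => d ω * μf (X ω) * w (X ω)) P ∧
      ∫ ω, b ω * Y ω * w (X ω) ∂P = c * ∫ ω, d ω * μf (X ω) * w (X ω) ∂P := by
  have hb0 : ∀ ω, 0 ≤ b ω := fun ω => by rcases hb01 ω with h | h <;> simp [h]
  have hb1 : ∀ ω, b ω ≤ 1 := fun ω => by rcases hb01 ω with h | h <;> simp [h]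
  have hd0 : ∀ ω, 0 ≤ d ω := fun ω => by rcases hd01 ω with h | h <;> simp [h]
  have hd1 : ∀ ω, d ω ≤ 1 := fun ω => by rcases hd01 ω with h | h <;> simp [h]
  -- truncated weights
  set hn : ℕ → (Fin p → ℝ) → ℝ := fun n x => min (w x) n with hhn
  have hnm : ∀ n, Measurable (hn n) := fun n => hwm.min measurable_const
  have hn0 : ∀ n x, 0 ≤ hn n x := fun n x => le_min (hw0 x) (Nat.cast_nonneg n)
  have hnw : ∀ n x, hn n x ≤ w x := fun n x => min_le_left _ _
  have hnb : ∀ n x, |hn n x| ≤ (n : ℝ) := fun n x => by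
    rw [abs_of_nonneg (hn0 n x)]; exact min_le_right _ _
  have hntend : ∀ x, Tendsto (fun n : ℕ => hn n x) atTop (𝓝 (w x)) := by
    intro x
    refine tendsto_atTop_of_eventually_const (i₀ := ⌈w x⌉₊) fun n hni => ?_
    exact min_eq_left ((Nat.le_ceil (w x)).trans (Nat.cast_le.2 hni))
  -- sign of μf
  set s : (Fin p → ℝ) → ℝ := fun x => if 0 ≤ μf x then 1 else -1 with hs
  have hsm : Measurable s := Measurable.ite (measurableSet_le measurable_const hμ)
    measurable_const measurable_const
  have hμs : ∀ x, μf x * s x = |μf x| := by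
    intro x
    by_cases h : 0 ≤ μf x
    · simp [hs, h, abs_of_nonneg h]
    · push_neg at h
      simp [hs, not_le.2 h, abs_of_neg h]
  have hs1 : ∀ x, |s x| ≤ 1 := fun x => by by_cases h : 0 ≤ μf x <;> simp [hs, h]
  -- integrability of truncated LHS integrands
  have key : ∀ h : (Fin p → ℝ) → ℝ, Measurable h → (∀ x, |h x| ≤ w x) →
      Integrable (fun ω => b ω * Y ω * h (X ω)) P := by
    intro h hm hbd
    refine hint.abs.mono' (((hb.mul hY).mul (hm.comp hX)).aestronglyMeasurable)
      (ae_of_all _ fun ω => ?_)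
    have : |b ω * Y ω * h (X ω)| ≤ |b ω * Y ω| * w (X ω) := by
      rw [abs_mul]
      exact mul_le_mul_of_nonneg_left (hbd _) (abs_nonneg _)
    calc ‖b ω * Y ω * h (X ω)‖ = |b ω * Y ω * h (X ω)| := rfl
      _ ≤ |b ω * Y ω| * w (X ω) := this
      _ = |b ω * Y ω * w (X ω)| := by
          rw [abs_mul (b ω * Y ω) (w (X ω)), abs_of_nonneg (hw0 _)]
  have hbYwabs : ∀ ω, |b ω * Y ω| * w (X ω) = |b ω * Y ω * w (X ω)| := fun ω => by
    rw [abs_mul (b ω * Y ω) (w (X ω)), abs_of_nonneg (hw0 _)]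
  -- LHS convergence
  have tend1 : Tendsto (fun n : ℕ => ∫ ω, b ω * Y ω * hn n (X ω) ∂P) atTop
      (𝓝 (∫ ω, b ω * Y ω * w (X ω) ∂P)) := by
    refine tendsto_integral_of_dominated_convergence
      (fun ω => |b ω * Y ω * w (X ω)|)
      (fun n => ((hb.mul hY).mul ((hnm n).comp hX)).aestronglyMeasurable)
      hint.abs (fun n => ae_of_all _ fun ω => ?_) (ae_of_all _ fun ω => ?_)
    · calc ‖b ω * Y ω * hn n (X ω)‖ = |b ω * Y ω| * |hn n (X ω)| := abs_mul _ _
        _ ≤ |b ω * Y ω| * w (X ω) := by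
            refine mul_le_mul_of_nonneg_left ?_ (abs_nonneg _)
            rw [abs_of_nonneg (hn0 n _)]; exact hnw n _
        _ = |b ω * Y ω * w (X ω)| := hbYwabs ω
    · exact (hntend (X ω)).const_mul _
  -- the identity for each truncation level, with sign twist
  have eqsgn : ∀ n : ℕ, ∫ ω, b ω * Y ω * (hn n (X ω) * s (X ω)) ∂P
      = c * ∫ ω, d ω * |μf (X ω)| * hn n (X ω) ∂P := by
    intro n
    have h1 := hout (fun x => hn n x * s x) ((hnm n).mul hsm)
      ⟨(n : ℝ), fun x => by
        rw [abs_mul]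
        calc |hn n x| * |s x| ≤ (n : ℝ) * 1 :=
          mul_le_mul (hnb n x) (hs1 x) (abs_nonneg _) (Nat.cast_nonneg n)
        _ = n := mul_one _⟩
    rw [h1]
    congr 1
    refine integral_congr_ae (ae_of_all _ fun ω => ?_)
    have := hμs (X ω)
    calc d ω * μf (X ω) * (hn n (X ω) * s (X ω))
        = d ω * (μf (X ω) * s (X ω)) * hn n (X ω) := by ring
      _ = d ω * |μf (X ω)| * hn n (X ω) := by rw [this]
  -- integrability of each truncated RHS integrand
  have intDn : ∀ n : ℕ, Integrable (fun ω => d ω * |μf (X ω)| * hn n (X ω)) P := by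
    intro n
    have h1 : Integrable (fun ω => (d ω * hn n (X ω)) * |μf (X ω)|) P := by
      refine Integrable.bdd_mul hμint.abs
        ((hd.mul ((hnm n).comp hX)).aestronglyMeasurable) (c := (n : ℝ)) (ae_of_all _ fun ω => ?_)
      calc ‖d ω * hn n (X ω)‖ = |d ω| * |hn n (X ω)| := abs_mul _ _
        _ ≤ 1 * (n : ℝ) := mul_le_mul (by rw [abs_of_nonneg (hd0 ω)]; exact hd1 ω)
            (hnb n _) (abs_nonneg _) zero_le_one
        _ = n := one_mul _
    exact h1.congr (ae_of_all _ fun ω => by ring)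
  -- uniform bound on the truncated RHS integrals
  set C₀ : ℝ := ∫ ω, |b ω * Y ω * w (X ω)| ∂P with hC₀
  have intbound : ∀ n : ℕ, ∫ ω, d ω * |μf (X ω)| * hn n (X ω) ∂P ≤ C₀ / c := by
    intro n
    rw [le_div_iff₀ hc]
    have h2 : (∫ ω, d ω * |μf (X ω)| * hn n (X ω) ∂P) * c
        = ∫ ω, b ω * Y ω * (hn n (X ω) * s (X ω)) ∂P := by
      rw [eqsgn n]; ring
    rw [h2]
    refine integral_mono (key _ ((hnm n).mul hsm) fun x => ?_) hint.abs fun ω => ?_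
    · rw [Pi.mul_apply, abs_mul]
      have hx : |hn n x| ≤ w x := (abs_of_nonneg (hn0 n x)).le.trans (hnw n x)
      have := mul_le_mul hx (hs1 x) (abs_nonneg _) (hw0 x)
      simpa using this
    · calc b ω * Y ω * (hn n (X ω) * s (X ω))
          ≤ |b ω * Y ω * (hn n (X ω) * s (X ω))| := le_abs_self _
        _ = |b ω * Y ω| * (|hn n (X ω)| * |s (X ω)|) := by simp [abs_mul]
        _ ≤ |b ω * Y ω| * (w (X ω) * 1) := by
            refine mul_le_mul_of_nonneg_left ?_ (abs_nonneg _)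
            exact mul_le_mul (by rw [abs_of_nonneg (hn0 n _)]; exact hnw n _)
              (hs1 _) (abs_nonneg _) (hw0 _)
        _ = |b ω * Y ω| * w (X ω) := by rw [mul_one]
        _ = |b ω * Y ω * w (X ω)| := hbYwabs ω
  -- integrability of the limit RHS integrand (in absolute value)
  have Dnn : ∀ ω, 0 ≤ d ω * |μf (X ω)| * w (X ω) := fun ω =>
    mul_nonneg (mul_nonneg (hd0 ω) (abs_nonneg _)) (hw0 _)
  have Dnnn : ∀ n, ∀ ω, 0 ≤ d ω * |μf (X ω)| * hn n (X ω) := fun n ω =>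
    mul_nonneg (mul_nonneg (hd0 ω) (abs_nonneg _)) (hn0 n _)
  have Dmeas : Measurable (fun ω => d ω * |μf (X ω)| * w (X ω)) :=
    (hd.mul ((hμ.comp hX).abs)).mul (hwm.comp hX)
  have intD : Integrable (fun ω => d ω * |μf (X ω)| * w (X ω)) P := by
    refine ⟨Dmeas.aestronglyMeasurable, ?_⟩
    rw [hasFiniteIntegral_iff_ofReal (ae_of_all _ Dnn)]
    have hsup : ∀ ω, (⨆ n : ℕ, ENNReal.ofReal (d ω * |μf (X ω)| * hn n (X ω)))
        = ENNReal.ofReal (d ω * |μf (X ω)| * w (X ω)) := by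
      intro ω
      refine le_antisymm (iSup_le fun n => ENNReal.ofReal_le_ofReal ?_) ?_
      · exact mul_le_mul_of_nonneg_left (hnw n _) (mul_nonneg (hd0 ω) (abs_nonneg _))
      · have : ENNReal.ofReal (d ω * |μf (X ω)| * w (X ω))
            = ENNReal.ofReal (d ω * |μf (X ω)| * hn ⌈w (X ω)⌉₊ (X ω)) := by
          congr 2
          exact (min_eq_left (Nat.le_ceil _)).symm
        rw [this]
        exact le_iSup (fun n : ℕ => ENNReal.ofReal (d ω * |μf (X ω)| * hn n (X ω))) _
    have hmeas : ∀ n : ℕ, Measurable fun ω => ENNReal.ofReal (d ω * |μf (X ω)| * hn n (X ω)) :=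
      fun n => Measurable.ennreal_ofReal ((hd.mul ((hμ.comp hX).abs)).mul ((hnm n).comp hX))
    have hmono : Monotone fun (n : ℕ) (ω : Ω) => ENNReal.ofReal (d ω * |μf (X ω)| * hn n (X ω)) :=
      fun n m hnm' ω => ENNReal.ofReal_le_ofReal
        (mul_le_mul_of_nonneg_left (min_le_min le_rfl (Nat.cast_le.2 hnm'))
          (mul_nonneg (hd0 ω) (abs_nonneg _)))
    have h1 : ∫⁻ ω, ENNReal.ofReal (d ω * |μf (X ω)| * w (X ω)) ∂P
        = ∫⁻ ω, ⨆ n : ℕ, ENNReal.ofReal (d ω * |μf (X ω)| * hn n (X ω)) ∂P :=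
      lintegral_congr fun ω => (hsup ω).symm
    rw [h1, lintegral_iSup hmeas hmono]
    refine lt_of_le_of_lt (iSup_le fun n => ?_) (ENNReal.ofReal_lt_top (r := C₀ / c))
    rw [← ofReal_integral_eq_lintegral_ofReal (intDn n) (ae_of_all _ (Dnnn n))]
    exact ENNReal.ofReal_le_ofReal (intbound n)
  have intdμw : Integrable (fun ω => d ω * μf (X ω) * w (X ω)) P := by
    refine intD.mono' (((hd.mul (hμ.comp hX)).mul (hwm.comp hX))).aestronglyMeasurable
      (ae_of_all _ fun ω => ?_)
    calc ‖d ω * μf (X ω) * w (X ω)‖ = |d ω| * |μf (X ω)| * |w (X ω)| := by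
          rw [show ‖d ω * μf (X ω) * w (X ω)‖ = |d ω * μf (X ω) * w (X ω)| from rfl,
            abs_mul, abs_mul]
      _ = d ω * |μf (X ω)| * w (X ω) := by
          rw [abs_of_nonneg (hd0 ω), abs_of_nonneg (hw0 _)]
      _ ≤ d ω * |μf (X ω)| * w (X ω) := le_rfl
  -- RHS convergence
  have tend2 : Tendsto (fun n : ℕ => ∫ ω, d ω * μf (X ω) * hn n (X ω) ∂P) atTop
      (𝓝 (∫ ω, d ω * μf (X ω) * w (X ω) ∂P)) := by
    refine tendsto_integral_of_dominated_convergence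
      (fun ω => d ω * |μf (X ω)| * w (X ω))
      (fun n => ((hd.mul (hμ.comp hX)).mul ((hnm n).comp hX)).aestronglyMeasurable)
      intD (fun n => ae_of_all _ fun ω => ?_) (ae_of_all _ fun ω => ?_)
    · calc ‖d ω * μf (X ω) * hn n (X ω)‖
          = |d ω| * |μf (X ω)| * |hn n (X ω)| := by
            rw [show ‖d ω * μf (X ω) * hn n (X ω)‖ = |d ω * μf (X ω) * hn n (X ω)| from rfl,
              abs_mul, abs_mul]
        _ = d ω * |μf (X ω)| * hn n (X ω) := by
            rw [abs_of_nonneg (hd0 ω), abs_of_nonneg (hn0 n _)]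
        _ ≤ d ω * |μf (X ω)| * w (X ω) :=
            mul_le_mul_of_nonneg_left (hnw n _) (mul_nonneg (hd0 ω) (abs_nonneg _))
    · exact (hntend (X ω)).const_mul _
  -- conclude
  refine ⟨intdμw, ?_⟩
  have eqseq : ∀ n : ℕ, ∫ ω, b ω * Y ω * hn n (X ω) ∂P
      = c * ∫ ω, d ω * μf (X ω) * hn n (X ω) ∂P := fun n =>
    hout (hn n) (hnm n) ⟨(n : ℝ), hnb n⟩
  have tend1' : Tendsto (fun n : ℕ => ∫ ω, b ω * Y ω * hn n (X ω) ∂P) atTop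
      (𝓝 (c * ∫ ω, d ω * μf (X ω) * w (X ω) ∂P)) :=
    (tend2.const_mul c).congr fun n => (eqseq n).symm
  exact tendsto_nhds_unique tend1 tend1'

/-- Population-level consistency of the calibration-weighted estimator under a linear
CATE (Theorem 1, case (ii)): if `τ(X) = γᵀ g(X)` a.s. for some `γ ∈ ℝ^K`, and `w : ℝ^p → [0,∞)` is
a measurable weight whose δ-weighted g-moments are calibrated to the population,
`E[δ·w(X)·g(X)] = E[g(X)]` componentwise, then
`E[δ·w(X)·(A·Y/π_A − (1−A)·Y/(1−π_A))] = τ0`. -/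
theorem stmt_4
    {Ω : Type*} [MeasurableSpace Ω] (P : Measure Ω) [IsProbabilityMeasure P]
    {p K : ℕ} (X : Ω → (Fin p → ℝ)) (hX : Measurable X)
    (δ A Y : Ω → ℝ)
    (hδ : Measurable δ) (hA : Measurable A) (hY : Measurable Y)
    (hδ01 : ∀ ω, δ ω = 0 ∨ δ ω = 1) (hA01 : ∀ ω, A ω = 0 ∨ A ω = 1)
    (hYsq : Integrable (fun ω => (Y ω) ^ 2) P)
    (g : (Fin p → ℝ) → (Fin K → ℝ)) (hgm : Measurable g)
    (hgint : Integrable (fun ω => g (X ω)) P)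
    (πA : ℝ) (hπA0 : 0 < πA) (hπA1 : πA < 1)
    (μ0 μ1 : (Fin p → ℝ) → ℝ) (hμ0m : Measurable μ0) (hμ1m : Measurable μ1)
    (hμ0sq : Integrable (fun ω => (μ0 (X ω)) ^ 2) P)
    (hμ1sq : Integrable (fun ω => (μ1 (X ω)) ^ 2) P)
    (hout1 : ∀ h : (Fin p → ℝ) → ℝ, Measurable h → (∃ C, ∀ x, |h x| ≤ C) →
      ∫ ω, δ ω * A ω * Y ω * h (X ω) ∂P = πA * ∫ ω, δ ω * μ1 (X ω) * h (X ω) ∂P)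
    (hout0 : ∀ h : (Fin p → ℝ) → ℝ, Measurable h → (∃ C, ∀ x, |h x| ≤ C) →
      ∫ ω, δ ω * (1 - A ω) * Y ω * h (X ω) ∂P
        = (1 - πA) * ∫ ω, δ ω * μ0 (X ω) * h (X ω) ∂P)
    (γ : Fin K → ℝ)
    (hlin : ∀ᵐ ω ∂P, μ1 (X ω) - μ0 (X ω) = ∑ k, γ k * g (X ω) k)
    (w : (Fin p → ℝ) → ℝ) (hwm : Measurable w) (hw0 : ∀ x, 0 ≤ w x)
    (hcal : ∀ k, ∫ ω, δ ω * w (X ω) * g (X ω) k ∂P = ∫ ω, g (X ω) k ∂P)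
    (hintwY : Integrable (fun ω => δ ω * w (X ω) * Y ω) P)
    (hintwg : Integrable (fun ω => fun k => δ ω * w (X ω) * g (X ω) k) P) :
    ∫ ω, δ ω * w (X ω) * (A ω * Y ω / πA - (1 - A ω) * Y ω / (1 - πA)) ∂P
      = ∫ ω, (μ1 (X ω) - μ0 (X ω)) ∂P := by
  have hπA1' : 0 < 1 - πA := by linarith
  have hδ0 : ∀ ω, 0 ≤ δ ω := fun ω => by rcases hδ01 ω with h | h <;> simp [h]
  -- μ integrability from square-integrability
  have sqint : ∀ (μf : (Fin p → ℝ) → ℝ), Integrable (fun ω => (μf (X ω)) ^ 2) P →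
      Measurable μf → Integrable (fun ω => μf (X ω)) P := by
    intro μf hsq hm
    refine (hsq.add (integrable_const 1)).mono' ((hm.comp hX).aestronglyMeasurable)
      (ae_of_all _ fun ω => ?_)
    have h1 : |μf (X ω)| ≤ (μf (X ω)) ^ 2 + 1 := by nlinarith [sq_abs (μf (X ω)), sq_nonneg (|μf (X ω)| - 1), abs_nonneg (μf (X ω))]
    calc ‖μf (X ω)‖ = |μf (X ω)| := rfl
      _ ≤ (μf (X ω)) ^ 2 + 1 := h1
  have hμ1int := sqint μ1 hμ1sq hμ1m
  have hμ0int := sqint μ0 hμ0sq hμ0m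
  -- integrability of the treated/control LHS integrands
  have habs : ∀ ω, |δ ω * w (X ω) * Y ω| = δ ω * w (X ω) * |Y ω| := by
    intro ω
    rw [abs_mul, abs_mul, abs_of_nonneg (hδ0 ω), abs_of_nonneg (hw0 _)]
  have hI1 : Integrable (fun ω => δ ω * A ω * Y ω * w (X ω)) P := by
    refine hintwY.abs.mono'
      ((((hδ.mul hA).mul hY).mul (hwm.comp hX)).aestronglyMeasurable)
      (ae_of_all _ fun ω => ?_)
    rw [habs ω]
    rcases hδ01 ω with h | h <;> rcases hA01 ω with h' | h' <;>
      simp [h, h', abs_mul, abs_of_nonneg (hw0 (X ω))] <;>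
      first
        | exact mul_nonneg (hw0 _) (abs_nonneg _)
        | exact le_of_eq (mul_comm _ _)
        | positivity
  have hI0 : Integrable (fun ω => δ ω * (1 - A ω) * Y ω * w (X ω)) P := by
    refine hintwY.abs.mono'
      ((((hδ.mul (measurable_const.sub hA)).mul hY).mul (hwm.comp hX)).aestronglyMeasurable)
      (ae_of_all _ fun ω => ?_)
    rw [habs ω]
    rcases hδ01 ω with h | h <;> rcases hA01 ω with h' | h' <;>
      simp [h, h', abs_mul, abs_of_nonneg (hw0 (X ω))] <;>
      first
        | exact mul_nonneg (hw0 _) (abs_nonneg _)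
        | exact le_of_eq (mul_comm _ _)
        | positivity
  -- apply the auxiliary lemma twice
  have aux1 := aux_calib P X hX (fun ω => δ ω * A ω) δ Y (hδ.mul hA) hδ hY
    (fun ω => by rcases hδ01 ω with h | h <;> rcases hA01 ω with h' | h' <;> simp [h, h'])
    hδ01 πA hπA0 μ1 hμ1m hμ1int w hwm hw0 hI1 hout1
  have aux0 := aux_calib P X hX (fun ω => δ ω * (1 - A ω)) δ Y
    (hδ.mul (measurable_const.sub hA)) hδ hY
    (fun ω => by rcases hδ01 ω with h | h <;> rcases hA01 ω with h' | h' <;> simp [h, h'])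
    hδ01 (1 - πA) hπA1' μ0 hμ0m hμ0int w hwm hw0 hI0 hout0
  obtain ⟨J1, E1⟩ := aux1
  obtain ⟨J0, E0⟩ := aux0
  -- rewrite LHS integrand
  have hπne : πA ≠ 0 := ne_of_gt hπA0
  have hπne' : (1 : ℝ) - πA ≠ 0 := ne_of_gt hπA1'
  have step1 : ∫ ω, δ ω * w (X ω) * (A ω * Y ω / πA - (1 - A ω) * Y ω / (1 - πA)) ∂P
      = πA⁻¹ * ∫ ω, δ ω * A ω * Y ω * w (X ω) ∂P
        - (1 - πA)⁻¹ * ∫ ω, δ ω * (1 - A ω) * Y ω * w (X ω) ∂P := by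
    rw [← integral_const_mul, ← integral_const_mul, ← integral_sub
      (hI1.const_mul _) (hI0.const_mul _)]
    refine integral_congr_ae (ae_of_all _ fun ω => ?_)
    field_simp
  have step2 : ∫ ω, δ ω * w (X ω) * (A ω * Y ω / πA - (1 - A ω) * Y ω / (1 - πA)) ∂P
      = ∫ ω, δ ω * μ1 (X ω) * w (X ω) ∂P - ∫ ω, δ ω * μ0 (X ω) * w (X ω) ∂P := by
    rw [step1, E1, E0]
    field_simp
  -- componentwise integrability of δ w g
  have hgk : ∀ k, Integrable (fun ω => δ ω * w (X ω) * g (X ω) k) P := fun k =>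
    (ContinuousLinearMap.proj (R := ℝ) (φ := fun _ : Fin K => ℝ) k).integrable_comp hintwg
  have hgkpop : ∀ k, Integrable (fun ω => g (X ω) k) P := fun k =>
    (ContinuousLinearMap.proj (R := ℝ) (φ := fun _ : Fin K => ℝ) k).integrable_comp hgint
  have step3 : ∫ ω, δ ω * μ1 (X ω) * w (X ω) ∂P - ∫ ω, δ ω * μ0 (X ω) * w (X ω) ∂P
      = ∑ k, γ k * ∫ ω, δ ω * w (X ω) * g (X ω) k ∂P := by
    rw [← integral_sub J1 J0]
    have : ∫ ω, (δ ω * μ1 (X ω) * w (X ω) - δ ω * μ0 (X ω) * w (X ω)) ∂P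
        = ∫ ω, ∑ k, γ k * (δ ω * w (X ω) * g (X ω) k) ∂P := by
      refine integral_congr_ae ?_
      filter_upwards [hlin] with ω h
      calc δ ω * μ1 (X ω) * w (X ω) - δ ω * μ0 (X ω) * w (X ω)
          = δ ω * w (X ω) * (μ1 (X ω) - μ0 (X ω)) := by ring
        _ = δ ω * w (X ω) * ∑ k, γ k * g (X ω) k := by rw [h]
        _ = ∑ k, γ k * (δ ω * w (X ω) * g (X ω) k) := by
            rw [Finset.mul_sum]
            exact Finset.sum_congr rfl fun k _ => by ring
    rw [this, integral_finset_sum _ (fun k _ => (hgk k).const_mul (γ k))]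
    exact Finset.sum_congr rfl fun k _ => integral_const_mul _ _
  have step4 : ∑ k, γ k * ∫ ω, δ ω * w (X ω) * g (X ω) k ∂P
      = ∫ ω, (μ1 (X ω) - μ0 (X ω)) ∂P := by
    have h1 : ∑ k, γ k * ∫ ω, δ ω * w (X ω) * g (X ω) k ∂P
        = ∑ k, γ k * ∫ ω, g (X ω) k ∂P :=
      Finset.sum_congr rfl fun k _ => by rw [hcal k]
    rw [h1]
    have h2 : ∑ k, γ k * ∫ ω, g (X ω) k ∂P = ∫ ω, ∑ k, γ k * g (X ω) k ∂P := by
      rw [integral_finset_sum _ (fun k _ => (hgkpop k).const_mul (γ k))]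
      exact Finset.sum_congr rfl fun k _ => (integral_const_mul _ _).symm
    rw [h2]
    exact (integral_congr_ae hlin).symm
  rw [step2, step3, step4]
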